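/- Let M be a rank m matroid on the ground set [n] = {1,...,n} with no loops and no coloops, and let B = {b_1,...,b_m} be a basis of M. The map f_B : ℝ^m → ℝ^n defined by f_B(x)_i = x_j if i = b_j for some j, and f_B(x)_i = min{x_j : b_j ∈ C(i,B) − {i}} if i ∈ [n] − B, is a homeomorphism from ℝ^m onto the local tropical linear space Trop(M)_B (equipped with the subspace topology from ℝ^n). -/

import Mathlib

/-- `C` is a circuit of the matroid `M`: a minimal dependent subset of the ground set. -/
def IsCircuitOf {α : Type*} (M : Matroid α) (C : Set α) : Prop :=
  C ⊆ M.E ∧ ¬ M.Indep C ∧ ∀ D, D ⊂ C → M.Indep D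

/-- The fundamental circuit `C(e,B)` of `e` over `B`: the unique circuit of `M`
contained in `B ∪ {e}` (realized as the intersection of all such circuits). -/
def fundCircuitOf {α : Type*} (M : Matroid α) (e : α) (B : Set α) : Set α :=
  ⋂₀ {C | IsCircuitOf M C ∧ C ⊆ insert e B}

/-- The minimum of `v` over `C` is attained at least twice. -/
def MinAttainedTwice {n : ℕ} (v : Fin n → ℝ) (C : Set (Fin n)) : Prop :=
  ∃ j ∈ C, ∃ k ∈ C, j ≠ k ∧ v j = v k ∧ ∀ i ∈ C, v j ≤ v i

/-- `v` lies in the tropical linear space `Trop(M)`: for every circuit `C` of `M`,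
the minimum of `v` over `C` is attained at least twice. -/
def InTrop {n : ℕ} (M : Matroid (Fin n)) (v : Fin n → ℝ) : Prop :=
  ∀ C, IsCircuitOf M C → MinAttainedTwice v C

/-- The `v`-weight of a set `B`, i.e. `∑ i ∈ B, v i`. -/
noncomputable def weightOf {n : ℕ} (v : Fin n → ℝ) (B : Set (Fin n)) : ℝ :=
  ∑ i, B.indicator v i

section AuxLemmas

open Set

variable {n : ℕ} {M : Matroid (Fin n)}

/-- every dependent set contains a circuit (finite ground type) -/
lemma exists_circuitOf_subset (hE : M.E = Set.univ) {X : Set (Fin n)} (hX : ¬ M.Indep X) :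
    ∃ C, C ⊆ X ∧ IsCircuitOf M C := by
  obtain ⟨C, hC, hmin⟩ := Set.Finite.exists_minimal (s := {D | D ⊆ X ∧ ¬ M.Indep D})
    (Set.toFinite _) ⟨X, subset_rfl, hX⟩
  refine ⟨C, hC.1, by rw [hE]; exact subset_univ _, hC.2, fun D hD => ?_⟩
  by_contra hDind
  exact hD.2 (hmin ⟨hD.subset.trans hC.1, hDind⟩ hD.subset)

lemma IsCircuitOf.diff_singleton_indep {C : Set (Fin n)} (hC : IsCircuitOf M C) {e : Fin n}
    (he : e ∈ C) : M.Indep (C \ {e}) :=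
  hC.2.2 _ (Set.sdiff_singleton_ssubset.mpr he)

lemma IsCircuitOf.dep {C : Set (Fin n)} (hC : IsCircuitOf M C) : M.Dep C :=
  ⟨hC.2.1, hC.1⟩

lemma IsCircuitOf.eq_of_subset {C C' : Set (Fin n)} (hC : IsCircuitOf M C)
    (hC' : IsCircuitOf M C') (h : C' ⊆ C) : C' = C := by
  by_contra hne
  exact hC'.2.1 (hC.2.2 _ (h.ssubset_of_ne hne))

lemma IsCircuitOf.mem_closure_diff {C : Set (Fin n)} (hC : IsCircuitOf M C) {e : Fin n}
    (he : e ∈ C) : e ∈ M.closure (C \ {e}) := by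
  rw [(hC.diff_singleton_indep he).mem_closure_iff_of_notMem (by simp)]
  have : insert e (C \ {e}) = C := by simp [he]
  rw [this]; exact hC.dep

lemma circuit_elim_dep (hE : M.E = Set.univ) {C₁ C₂ : Set (Fin n)} (h1 : IsCircuitOf M C₁)
    (h2 : IsCircuitOf M C₂) (hne : C₁ ≠ C₂) {f : Fin n} (hf1 : f ∈ C₁) (hf2 : f ∈ C₂) :
    ¬ M.Indep ((C₁ ∪ C₂) \ {f}) := by
  intro hY
  set X := C₁ ∪ C₂ with hX
  have hXE : X ⊆ M.E := by rw [hE]; exact subset_univ _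
  have hfX : f ∈ X := Or.inl hf1
  obtain ⟨g, hg1, hg2⟩ : ∃ g, g ∈ C₁ ∧ g ∉ C₂ := by
    by_contra h
    push_neg at h
    exact hne (h2.eq_of_subset h1 h)
  have hgX : g ∈ X := Or.inl hg1
  have hfg : f ≠ g := fun h => hg2 (h ▸ hf2)
  -- X \ {f} is a basis of X
  have hYbasis : M.IsBasis (X \ {f}) X := by
    refine hY.isBasis_of_forall_insert diff_subset (fun e he => ?_)
    have : e = f := by
      rcases he with ⟨heX, henot⟩
      by_contra hef
      exact henot ⟨heX, hef⟩
    subst this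
    have : insert e (X \ {e}) = X := by simp [hfX]
    rw [this]
    exact h1.dep.superset subset_union_left hXE
  -- extend C₁ \ {g} to a basis J of X
  obtain ⟨J, hJbasis, hJsub⟩ := (h1.diff_singleton_indep hg1).subset_isBasis_of_subset
    (diff_subset.trans subset_union_left) hXE
  have hgJ : g ∉ J := by
    intro hgJ
    have : C₁ ⊆ J := by
      intro x hx
      by_cases hxg : x = g
      · exact hxg ▸ hgJ
      · exact hJsub ⟨hx, hxg⟩
    exact h1.2.1 (hJbasis.indep.subset this)
  have hJsubX : J ⊆ X \ {g} := fun x hx => ⟨hJbasis.subset hx, fun h => hgJ (h ▸ hx)⟩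
  -- cardinalities
  have hcard : J.encard = (X \ {f}).encard := hJbasis.encard_eq_encard hYbasis
  have hcard2 : (X \ {f}).encard = (X \ {g}).encard := by
    have h1' := Set.encard_diff_singleton_add_one hfX
    have h2' := Set.encard_diff_singleton_add_one hgX
    have := h1'.trans h2'.symm
    exact WithTop.add_right_cancel ENat.one_ne_top this
  have hJeq : J = X \ {g} :=
    (Set.toFinite _).eq_of_subset_of_encard_le hJsubX (le_of_eq (hcard.trans hcard2).symm)
  have : C₂ ⊆ J := by
    rw [hJeq]
    exact fun x hx => ⟨Or.inr hx, fun h => hg2 (h ▸ hx)⟩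
  exact h2.2.1 (hJbasis.indep.subset this)

/-- Specification of the fundamental circuit. -/
lemma fundCircuit_spec (hE : M.E = Set.univ) {B : Set (Fin n)} {i : Fin n}
    (hB : M.IsBase B) (hi : i ∉ B) :
    IsCircuitOf M (fundCircuitOf M i B) ∧ i ∈ fundCircuitOf M i B ∧
      fundCircuitOf M i B ⊆ insert i B := by
  have hdep : M.Dep (insert i B) := hB.insert_dep ⟨by rw [hE]; trivial, hi⟩
  obtain ⟨C₀, hC₀sub, hC₀⟩ := exists_circuitOf_subset hE hdep.not_indep
  have hiC₀ : i ∈ C₀ := by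
    by_contra h
    exact hC₀.2.1 (hB.indep.subset (fun x hx => ((hC₀sub hx).resolve_left (fun he => h (he ▸ hx)))))
  have huniq : ∀ C, IsCircuitOf M C → C ⊆ insert i B → C = C₀ := by
    intro C hC hCsub
    have hiC : i ∈ C := by
      by_contra h
      exact hC.2.1 (hB.indep.subset (fun x hx => ((hCsub hx).resolve_left (fun he => h (he ▸ hx)))))
    by_contra hne
    refine circuit_elim_dep hE hC hC₀ hne hiC hiC₀ (hB.indep.subset ?_)
    rintro x ⟨hx, hxi⟩
    rcases hx with hx | hx
    · exact (hCsub hx).resolve_left hxi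
    · exact (hC₀sub hx).resolve_left hxi
  have hset : {C | IsCircuitOf M C ∧ C ⊆ insert i B} = {C₀} := by
    ext C
    simp only [mem_setOf_eq, mem_singleton_iff]
    exact ⟨fun h => huniq C h.1 h.2, fun h => h ▸ ⟨hC₀, hC₀sub⟩⟩
  have heq : fundCircuitOf M i B = C₀ := by
    rw [fundCircuitOf, hset, sInter_singleton]
  exact ⟨heq ▸ hC₀, heq ▸ hiC₀, heq ▸ hC₀sub⟩

lemma fundCircuit_diff_subset (hE : M.E = Set.univ) {B : Set (Fin n)} {i : Fin n}
    (hB : M.IsBase B) (hi : i ∉ B) : fundCircuitOf M i B \ {i} ⊆ B := by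
  intro x hx
  exact ((fundCircuit_spec hE hB hi).2.2 hx.1).resolve_left hx.2

/-- exchange along the fundamental circuit -/
lemma base_exchange_fund (hE : M.E = Set.univ) {B : Set (Fin n)} {i : Fin n}
    (hB : M.IsBase B) (hi : i ∉ B) {e : Fin n} (he : e ∈ fundCircuitOf M i B \ {i}) :
    M.IsBase (insert i B \ {e}) := by
  obtain ⟨hK, hiK, hKsub⟩ := fundCircuit_spec hE hB hi
  have heB : e ∈ B := fundCircuit_diff_subset hE hB hi he
  refine hB.exchange_isBase_of_indep' heB hi ?_
  by_contra hdep
  obtain ⟨C, hCsub, hC⟩ := exists_circuitOf_subset hE hdep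
  have : C = fundCircuitOf M i B := by
    have hdep' : M.Dep (insert i B) := hB.insert_dep ⟨by rw [hE]; trivial, hi⟩
    obtain ⟨C₀, hC₀sub, hC₀⟩ := exists_circuitOf_subset hE hdep'.not_indep
    -- reuse uniqueness: both C and fundCircuitOf are circuits inside insert i B
    have h1 : C ⊆ insert i B := hCsub.trans diff_subset
    -- uniqueness of circuits inside insert i B:
    by_contra hne
    have hiC : i ∈ C := by
      by_contra h
      exact hC.2.1 (hB.indep.subset (fun x hx => ((h1 hx).resolve_left (fun h' => h (h' ▸ hx)))))
    refine circuit_elim_dep hE hC hK hne hiC hiK (hB.indep.subset ?_)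
    rintro x ⟨hx, hxi⟩
    rcases hx with hx | hx
    · exact (h1 hx).resolve_left hxi
    · exact (hKsub hx).resolve_left hxi
  exact (hCsub (this ▸ he.1)).2 rfl

/-- covering: every element of `C ∩ B` lies in some fundamental circuit `C(k,B)`, `k ∈ C \ B` -/
lemma fundCircuit_covering (hE : M.E = Set.univ) {B : Set (Fin n)} (hB : M.IsBase B)
    {C : Set (Fin n)} (hC : IsCircuitOf M C) {e : Fin n} (heC : e ∈ C) (heB : e ∈ B) :
    ∃ k ∈ C \ B, e ∈ fundCircuitOf M k B := by
  by_contra h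
  push_neg at h
  have hsub : C \ {e} ⊆ M.closure (B \ {e}) := by
    rintro x ⟨hxC, hxe⟩
    by_cases hxB : x ∈ B
    · exact M.subset_closure (B \ {e}) (by rw [hE]; exact subset_univ _) ⟨hxB, hxe⟩
    · have hx' : x ∈ C \ B := ⟨hxC, hxB⟩
      obtain ⟨hK, hxK, hKsub⟩ := fundCircuit_spec hE hB hxB
      have hKdiff : fundCircuitOf M x B \ {x} ⊆ B \ {e} := by
        rintro y ⟨hy, hyx⟩
        refine ⟨(hKsub hy).resolve_left hyx, fun hye => h x hx' (hye ▸ hy)⟩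
      exact M.closure_subset_closure hKdiff (hK.mem_closure_diff hxK)
  have : e ∈ M.closure (B \ {e}) := by
    have h1 : e ∈ M.closure (C \ {e}) := hC.mem_closure_diff heC
    exact M.closure_subset_closure_of_subset_closure hsub h1
  exact hB.indep.notMem_closure_sdiff_of_mem heB this

/-- exchange between two bases, with the new element from a fundamental circuit -/
lemma exchange_two_bases (hE : M.E = Set.univ) {B B' : Set (Fin n)} (hB : M.IsBase B)
    (hB' : M.IsBase B') {i : Fin n} (hi : i ∈ B' \ B) :
    ∃ e ∈ fundCircuitOf M i B \ {i}, e ∉ B' ∧ M.IsBase (insert e B' \ {i}) := by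
  obtain ⟨hK, hiK, hKsub⟩ := fundCircuit_spec hE hB hi.2
  have hindep : M.Indep (B' \ {i}) := hB'.indep.subset diff_subset
  obtain ⟨e, heK, hecl⟩ : ∃ e ∈ fundCircuitOf M i B \ {i}, e ∉ M.closure (B' \ {i}) := by
    by_contra h
    push_neg at h
    have : i ∈ M.closure (B' \ {i}) :=
      M.closure_subset_closure_of_subset_closure h (hK.mem_closure_diff hiK)
    exact hB'.indep.notMem_closure_sdiff_of_mem hi.1 this
  have heB' : e ∉ B' := by
    intro heB'
    have hei : e ≠ i := heK.2
    exact hecl (M.subset_closure (B' \ {i}) (by rw [hE]; exact subset_univ _) ⟨heB', hei⟩)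
  have hins : M.Indep (insert e (B' \ {i})) := by
    rw [hindep.insert_indep_iff_of_notMem (fun h => heB' h.1)]
    exact ⟨by rw [hE]; trivial, hecl⟩
  have hei : e ≠ i := heK.2
  exact ⟨e, heK, heB', hB'.exchange_isBase_of_indep' hi.1 heB'
    (by rw [← Set.insert_diff_singleton_comm hei]; exact hins)⟩

lemma weightOf_insert (v : Fin n → ℝ) {S : Set (Fin n)} {a : Fin n} (ha : a ∉ S) :
    weightOf v (insert a S) = v a + weightOf v S := by
  unfold weightOf
  have : ∀ i, (insert a S).indicator v i = ({a} : Set (Fin n)).indicator v i + S.indicator v i := by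
    intro i
    by_cases h1 : i = a
    · subst h1; simp [Set.indicator, ha]
    · by_cases h2 : i ∈ S <;> simp [Set.indicator, h1, h2]
  rw [Finset.sum_congr rfl (fun i _ => this i), Finset.sum_add_distrib]
  congr 1
  rw [Finset.sum_eq_single a (fun i _ h => by simp [Set.indicator, h]) (by simp)]
  simp [Set.indicator]

lemma weightOf_diff (v : Fin n → ℝ) {S : Set (Fin n)} {c : Fin n} (hc : c ∈ S) :
    weightOf v (S \ {c}) = weightOf v S - v c := by
  have h1 : insert c (S \ {c}) = S := by simp [hc]
  have h2 : c ∉ S \ {c} := by simp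
  have := weightOf_insert v h2
  rw [h1] at this
  linarith

/-- local inequalities at `B` imply `B` has maximal weight -/
lemma local_to_global (hE : M.E = Set.univ) {B : Set (Fin n)} (hB : M.IsBase B) (v : Fin n → ℝ)
    (H : ∀ i ∉ B, ∀ e ∈ fundCircuitOf M i B \ {i}, v i ≤ v e) :
    ∀ B', M.IsBase B' → weightOf v B' ≤ weightOf v B := by
  suffices h : ∀ k (B' : Set (Fin n)), M.IsBase B' → (B' \ B).ncard = k →
      weightOf v B' ≤ weightOf v B by
    intro B' hB'
    exact h _ B' hB' rfl
  intro k
  induction k using Nat.strong_induction_on with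
  | _ k ih =>
    intro B' hB' hk
    rcases eq_or_ne k 0 with rfl | hk0
    · have hsub : B' ⊆ B := by
        rw [Set.ncard_eq_zero (Set.toFinite _), Set.diff_eq_empty] at hk
        exact hk
      rw [hB'.eq_of_subset_isBase hB hsub]
    · obtain ⟨i, hi⟩ : (B' \ B).Nonempty := by
        rw [Set.nonempty_iff_ne_empty]
        intro h
        rw [h, Set.ncard_empty] at hk
        exact hk0 hk.symm
      obtain ⟨e, heK, heB', hbase⟩ := exchange_two_bases hE hB hB' hi
      have hei : e ≠ i := heK.2
      have heB : e ∈ B := fundCircuit_diff_subset hE hB hi.2 heK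
      set B'' := insert e B' \ {i} with hB''
      have hw : weightOf v B'' = weightOf v B' + v e - v i := by
        rw [hB'', weightOf_diff v (Or.inr hi.1 : i ∈ insert e B'), weightOf_insert v heB']
        ring
      have hdiff : B'' \ B = (B' \ B) \ {i} := by
        rw [hB'']
        ext x
        simp only [Set.mem_diff, Set.mem_insert_iff, Set.mem_singleton_iff]
        constructor
        · rintro ⟨⟨hx1 | hx1, hx2⟩, hx3⟩
          · exact absurd (hx1 ▸ heB) hx3
          · exact ⟨⟨hx1, hx3⟩, hx2⟩
        · rintro ⟨⟨hx1, hx2⟩, hx3⟩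
          exact ⟨⟨Or.inr hx1, hx3⟩, hx2⟩
      have hlt : (B'' \ B).ncard < k := by
        rw [hdiff, ← hk]
        exact Set.ncard_diff_singleton_lt_of_mem hi (Set.toFinite _)
      have hIH := ih _ hlt B'' hbase rfl
      have hvi : v i ≤ v e := H i hi.2 e heK
      linarith

/-- maximality of `B₁` implies the local inequalities at `B₁` -/
lemma max_to_local (hE : M.E = Set.univ) {B₁ : Set (Fin n)} (hB₁ : M.IsBase B₁) (v : Fin n → ℝ)
    (hmax : ∀ B', M.IsBase B' → weightOf v B' ≤ weightOf v B₁)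
    {i : Fin n} (hi : i ∉ B₁) {e : Fin n} (he : e ∈ fundCircuitOf M i B₁ \ {i}) : v i ≤ v e := by
  have hbase := base_exchange_fund hE hB₁ hi he
  have heB : e ∈ B₁ := fundCircuit_diff_subset hE hB₁ hi he
  have hei : i ≠ e := fun h => hi (h ▸ heB)
  have hw : weightOf v (insert i B₁ \ {e}) = weightOf v B₁ + v i - v e := by
    rw [weightOf_diff v (Or.inr heB : e ∈ insert i B₁), weightOf_insert v hi]
    ring
  have := hmax _ hbase
  rw [hw] at this
  linarith

lemma continuous_finset_inf' {ι : Type*} (s : Finset ι) :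
    ∀ (hs : s.Nonempty), Continuous fun x : ι → ℝ => s.inf' hs x := by
  induction s using Finset.cons_induction with
  | empty => intro hs; simp at hs
  | cons a s ha ih =>
    intro hs
    rcases s.eq_empty_or_nonempty with rfl | hs'
    · have h : (fun x : ι → ℝ => (Finset.cons a ∅ ha).inf' hs x) = fun x => x a := by
        funext x; simp
      rw [h]; exact continuous_apply a
    · have h : (fun x : ι → ℝ => (Finset.cons a s ha).inf' hs x)
          = fun x => min (x a) (s.inf' hs' x) := by
        funext x; rw [Finset.inf'_cons hs']
      rw [h]; exact Continuous.min (continuous_apply a) (ih hs')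

lemma continuous_sInf_image {ι : Type*} {S : Set ι} (hSfin : S.Finite) (hS : S.Nonempty) :
    Continuous fun x : ι → ℝ => sInf (x '' S) := by
  have hfin : hSfin.toFinset.Nonempty := by rwa [Set.Finite.toFinset_nonempty]
  have key : ∀ x : ι → ℝ, sInf (x '' S) = hSfin.toFinset.inf' hfin x := by
    intro x
    rw [Finset.inf'_eq_csInf_image, Set.Finite.coe_toFinset]
  simp only [key]
  exact continuous_finset_inf' _ hfin

end AuxLemmas

/-- For a rank `m` matroid `M` on `[n]` with no loops and no coloops and a
basis `B = {b 0, ..., b (m-1)}`, the map `f_B : ℝ^m → ℝ^n` given by `f_B(x)_{b j} = x j`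
and `f_B(x)_i = min { x j : b j ∈ C(i,B) - {i} }` for `i ∉ B` is a homeomorphism from
`ℝ^m` onto the local tropical linear space `Trop(M)_B` (with its subspace topology). -/
theorem statement3 {n m : ℕ} (M : Matroid (Fin n)) (hE : M.E = Set.univ)
    (hloops : ∀ e, M.Indep {e})
    (hcoloops : ∀ e, ∃ B, M.IsBase B ∧ e ∉ B)
    (B : Set (Fin n)) (hB : M.IsBase B)
    (b : Fin m → Fin n) (hb : Function.Injective b) (hbB : Set.range b = B)
    (fB : (Fin m → ℝ) → (Fin n → ℝ))
    (hfB : ∀ x j, fB x (b j) = x j)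
    (hfB' : ∀ x, ∀ i ∉ B, fB x i = sInf (x '' {j | b j ∈ fundCircuitOf M i B \ {i}})) :
    ∃ F : (Fin m → ℝ) ≃ₜ
        {v : Fin n → ℝ // InTrop M v ∧ ∀ B', M.IsBase B' → weightOf v B' ≤ weightOf v B},
      ∀ x, (F x : Fin n → ℝ) = fB x := by
  have hDne : ∀ i ∉ B, (fundCircuitOf M i B \ {i}).Nonempty := by
    intro i hi
    obtain ⟨hKc, hiK, hKsub⟩ := fundCircuit_spec hE hB hi
    by_contra h
    rw [Set.not_nonempty_iff_eq_empty, Set.diff_eq_empty] at h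
    exact hKc.2.1 ((hloops i).subset h)
  have hDsubB : ∀ i ∉ B, fundCircuitOf M i B \ {i} ⊆ B :=
    fun i hi => fundCircuit_diff_subset hE hB hi
  -- image rewriting
  have himg : ∀ (w : Fin n → ℝ) (S : Set (Fin n)), S ⊆ B →
      (fun j => w (b j)) '' {j | b j ∈ S} = w '' S := by
    intro w S hS
    ext y
    simp only [Set.mem_image, Set.mem_setOf_eq]
    constructor
    · rintro ⟨j, hj, rfl⟩; exact ⟨b j, hj, rfl⟩
    · rintro ⟨e, he, rfl⟩
      obtain ⟨j, rfl⟩ : e ∈ Set.range b := hbB ▸ hS he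
      exact ⟨j, he, rfl⟩
  -- value formula for non-basis coordinates
  have hval : ∀ (x : Fin m → ℝ) (i : Fin n), i ∉ B →
      fB x i = sInf (fB x '' (fundCircuitOf M i B \ {i})) := by
    intro x i hi
    rw [hfB' x i hi]
    have h1 : x '' {j | b j ∈ fundCircuitOf M i B \ {i}}
        = (fun j => fB x (b j)) '' {j | b j ∈ fundCircuitOf M i B \ {i}} :=
      Set.image_congr (fun j _ => (hfB x j).symm)
    rw [h1, himg (fB x) _ (hDsubB i hi)]
  have hlocal : ∀ (x : Fin m → ℝ) (i : Fin n), i ∉ B →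
      ∀ e ∈ fundCircuitOf M i B \ {i}, fB x i ≤ fB x e := by
    intro x i hi e he
    rw [hval x i hi]
    exact csInf_le (Set.Finite.bddBelow (Set.toFinite _)) ⟨e, he, rfl⟩
  have hattain : ∀ (x : Fin m → ℝ) (i : Fin n), i ∉ B →
      ∃ e ∈ fundCircuitOf M i B \ {i}, fB x e = fB x i := by
    intro x i hi
    have h1 : sInf (fB x '' (fundCircuitOf M i B \ {i})) ∈ fB x '' (fundCircuitOf M i B \ {i}) :=
      Set.Nonempty.csInf_mem ((hDne i hi).image _) (Set.toFinite _)
    obtain ⟨e, he, heq⟩ := h1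
    exact ⟨e, he, heq.trans (hval x i hi).symm⟩
  have hmax : ∀ x, ∀ B', M.IsBase B' → weightOf (fB x) B' ≤ weightOf (fB x) B :=
    fun x => local_to_global hE hB (fB x) (fun i hi e he => hlocal x i hi e he)
  have htrop : ∀ x, InTrop M (fB x) := by
    intro x C hC
    set v := fB x with hv
    obtain ⟨f, hfC, hfmin⟩ := Set.exists_min_image C v (Set.toFinite _) hC.dep.nonempty
    obtain ⟨B₁, hB₁, hfB₁, hB₁max⟩ : ∃ B₁, M.IsBase B₁ ∧ f ∈ B₁ ∧
        ∀ B'', M.IsBase B'' → weightOf v B'' ≤ weightOf v B₁ := by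
      by_cases hfmem : f ∈ B
      · exact ⟨B, hB, hfmem, hmax x⟩
      · obtain ⟨e, he, heq⟩ := hattain x f hfmem
        have heB : e ∈ B := hDsubB f hfmem he
        refine ⟨insert f B \ {e}, base_exchange_fund hE hB hfmem he,
          ⟨Set.mem_insert _ _, fun h => hfmem ((Set.mem_singleton_iff.mp h) ▸ heB)⟩, ?_⟩
        intro B'' hB''
        have hw : weightOf v (insert f B \ {e}) = weightOf v B + v f - v e := by
          rw [weightOf_diff v (Set.mem_insert_of_mem _ heB : e ∈ insert f B),
            weightOf_insert v hfmem]
          ring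
        have hve : v e = v f := heq
        have := hmax x B'' hB''
        rw [hw, hve]
        linarith
    obtain ⟨k, hk, hfk⟩ := fundCircuit_covering hE hB₁ hC hfC hfB₁
    have hkf : k ≠ f := fun h => hk.2 (h ▸ hfB₁)
    have hvk : v k ≤ v f := max_to_local hE hB₁ v hB₁max hk.2
      ⟨hfk, fun h => hkf (Set.mem_singleton_iff.mp h).symm⟩
    exact ⟨f, hfC, k, hk.1, fun h => hkf h.symm,
      le_antisymm (hfmin k hk.1) hvk, hfmin⟩
  have hsurj : ∀ v : Fin n → ℝ, InTrop M v →
      (∀ B', M.IsBase B' → weightOf v B' ≤ weightOf v B) → fB (fun j => v (b j)) = v := by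
    intro v htr hmx
    funext i
    by_cases hi : i ∈ B
    · obtain ⟨j, rfl⟩ : i ∈ Set.range b := hbB ▸ hi
      exact hfB _ j
    · rw [hfB' _ i hi, himg v _ (hDsubB i hi)]
      obtain ⟨hKc, hiK, hKsub⟩ := fundCircuit_spec hE hB hi
      have hlow : ∀ e ∈ fundCircuitOf M i B \ {i}, v i ≤ v e :=
        fun e he => max_to_local hE hB v hmx hi he
      obtain ⟨j, hjK, k, hkK, hjk, hjkeq, hjmin⟩ := htr _ hKc
      have hattain' : ∃ e ∈ fundCircuitOf M i B \ {i}, v e = v i := by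
        by_cases hji : j = i
        · subst hji
          refine ⟨k, ⟨hkK, fun h => hjk (Set.mem_singleton_iff.mp h).symm⟩, ?_⟩
          exact hjkeq.symm
        · exact ⟨j, ⟨hjK, hji⟩, le_antisymm (hjmin i hiK) (hlow j ⟨hjK, hji⟩)⟩
      obtain ⟨e, he, hee⟩ := hattain'
      apply le_antisymm
      · exact csInf_le (Set.Finite.bddBelow (Set.toFinite _)) ⟨e, he, hee⟩
      · refine le_csInf ((hDne i hi).image v) ?_
        rintro y ⟨e', he', rfl⟩
        exact hlow e' he'
  have hcontfB : Continuous fB := by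
    apply continuous_pi
    intro i
    by_cases hi : i ∈ B
    · obtain ⟨j, rfl⟩ : i ∈ Set.range b := hbB ▸ hi
      have h : (fun x => fB x (b j)) = fun x : Fin m → ℝ => x j := funext fun x => hfB x j
      rw [h]; exact continuous_apply j
    · have hSne : {j | b j ∈ fundCircuitOf M i B \ {i}}.Nonempty := by
        obtain ⟨e, he⟩ := hDne i hi
        obtain ⟨j, rfl⟩ : e ∈ Set.range b := hbB ▸ hDsubB i hi he
        exact ⟨j, he⟩
      have h : (fun x => fB x i)
          = fun x : Fin m → ℝ => sInf (x '' {j | b j ∈ fundCircuitOf M i B \ {i}}) :=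
        funext fun x => hfB' x i hi
      rw [h]
      exact continuous_sInf_image (Set.toFinite _) hSne
  refine ⟨{ toFun := fun x => ⟨fB x, htrop x, hmax x⟩,
            invFun := fun v j => v.1 (b j),
            left_inv := fun x => funext fun j => hfB x j,
            right_inv := fun v => Subtype.ext (hsurj v.1 v.2.1 v.2.2),
            continuous_toFun := hcontfB.subtype_mk _,
            continuous_invFun := continuous_pi fun j =>
              (continuous_apply (b j)).comp continuous_subtype_val },
         fun x => rfl⟩
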